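/- arXiv:2109.13350 — 3 statements merged into one kernel-verified Lean document; each statement's English description precedes it below -/
import Mathlib

section
/- If T is a bounded linear operator on an infinite-dimensional complex Banach space such that σ(T)\σ_bf(T) = Π_a(T) (T is class (gab_e)), then σ(T)\σ_e(T) = Π_a^0(T) (T is class (ab_e)). -/
open Filter Topology

variable {X : Type*} [NormedAddCommGroup X] [NormedSpace ℂ X] [CompleteSpace X]

/-- `S` is a Fredholm operator. -/
def IsFredholm (S : X →L[ℂ] X) : Prop :=
  FiniteDimensional ℂ (LinearMap.ker (S : X →ₗ[ℂ] X)) ∧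
  IsClosed ((LinearMap.range (S : X →ₗ[ℂ] X) : Submodule ℂ X) : Set X) ∧
  FiniteDimensional ℂ (X ⧸ LinearMap.range (S : X →ₗ[ℂ] X))

/-- `S` is a Weyl operator: Fredholm of index zero. -/
def IsWeyl (S : X →L[ℂ] X) : Prop :=
  IsFredholm S ∧
  Module.finrank ℂ (LinearMap.ker (S : X →ₗ[ℂ] X)) = Module.finrank ℂ (X ⧸ LinearMap.range (S : X →ₗ[ℂ] X))

/-- `S` is a B-Fredholm operator: for some `n`, `R(S^n)` is closed and the restriction
`S_[n] : R(S^n) → R(S^n)` is Fredholm (its kernel is `ker S ⊓ R(S^n)`, its range is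
`R(S^(n+1))`). -/
def IsBFredholm (S : X →L[ℂ] X) : Prop :=
  ∃ n : ℕ, IsClosed ((LinearMap.range (↑(S ^ n) : X →ₗ[ℂ] X) : Submodule ℂ X) : Set X) ∧
    IsClosed ((LinearMap.range (↑(S ^ (n + 1)) : X →ₗ[ℂ] X) : Submodule ℂ X) : Set X) ∧
    FiniteDimensional ℂ ↥(LinearMap.ker (S : X →ₗ[ℂ] X) ⊓ LinearMap.range (↑(S ^ n) : X →ₗ[ℂ] X)) ∧
    FiniteDimensional ℂ (↥(LinearMap.range (↑(S ^ n) : X →ₗ[ℂ] X)) ⧸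
      Submodule.comap (LinearMap.range (↑(S ^ n) : X →ₗ[ℂ] X)).subtype (LinearMap.range (↑(S ^ (n + 1)) : X →ₗ[ℂ] X)))

/-- `S` is a B-Weyl operator: B-Fredholm of index zero. -/
def IsBWeyl (S : X →L[ℂ] X) : Prop :=
  ∃ n : ℕ, IsClosed ((LinearMap.range (↑(S ^ n) : X →ₗ[ℂ] X) : Submodule ℂ X) : Set X) ∧
    IsClosed ((LinearMap.range (↑(S ^ (n + 1)) : X →ₗ[ℂ] X) : Submodule ℂ X) : Set X) ∧
    FiniteDimensional ℂ ↥(LinearMap.ker (S : X →ₗ[ℂ] X) ⊓ LinearMap.range (↑(S ^ n) : X →ₗ[ℂ] X)) ∧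
    FiniteDimensional ℂ (↥(LinearMap.range (↑(S ^ n) : X →ₗ[ℂ] X)) ⧸
      Submodule.comap (LinearMap.range (↑(S ^ n) : X →ₗ[ℂ] X)).subtype (LinearMap.range (↑(S ^ (n + 1)) : X →ₗ[ℂ] X))) ∧
    Module.finrank ℂ ↥(LinearMap.ker (S : X →ₗ[ℂ] X) ⊓ LinearMap.range (↑(S ^ n) : X →ₗ[ℂ] X)) =
      Module.finrank ℂ (↥(LinearMap.range (↑(S ^ n) : X →ₗ[ℂ] X)) ⧸
        Submodule.comap (LinearMap.range (↑(S ^ n) : X →ₗ[ℂ] X)).subtype (LinearMap.range (↑(S ^ (n + 1)) : X →ₗ[ℂ] X)))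

/-- `S` has finite ascent. -/
def HasFiniteAscent (S : X →L[ℂ] X) : Prop :=
  ∃ n : ℕ, LinearMap.ker (↑(S ^ n) : X →ₗ[ℂ] X) = LinearMap.ker (↑(S ^ (n + 1)) : X →ₗ[ℂ] X)

/-- `S` has finite descent. -/
def HasFiniteDescent (S : X →L[ℂ] X) : Prop :=
  ∃ n : ℕ, LinearMap.range (↑(S ^ n) : X →ₗ[ℂ] X) = LinearMap.range (↑(S ^ (n + 1)) : X →ₗ[ℂ] X)

/-- The approximate point spectrum of `T`: points `λ` where `T - λ` is not bounded below. -/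
def sigma_a (T : X →L[ℂ] X) : Set ℂ :=
  {l : ℂ | ¬ ∃ c > (0 : ℝ), ∀ x : X, c * ‖x‖ ≤ ‖(T - l • 1) x‖}

/-- The essential spectrum of `T`. -/
def sigma_e (T : X →L[ℂ] X) : Set ℂ := {l : ℂ | ¬ IsFredholm (T - l • 1)}

/-- The Weyl spectrum of `T`. -/
def sigma_w (T : X →L[ℂ] X) : Set ℂ := {l : ℂ | ¬ IsWeyl (T - l • 1)}

/-- The B-Fredholm spectrum of `T`. -/
def sigma_bf (T : X →L[ℂ] X) : Set ℂ := {l : ℂ | ¬ IsBFredholm (T - l • 1)}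

/-- The B-Weyl spectrum of `T`. -/
def sigma_bw (T : X →L[ℂ] X) : Set ℂ := {l : ℂ | ¬ IsBWeyl (T - l • 1)}

/-- The poles of the resolvent of `T`: spectral points with finite ascent and descent. -/
def poles (T : X →L[ℂ] X) : Set ℂ :=
  {l : ℂ | l ∈ spectrum ℂ T ∧ HasFiniteAscent (T - l • 1) ∧ HasFiniteDescent (T - l • 1)}

/-- The poles of `T` of finite rank. -/
def poles0 (T : X →L[ℂ] X) : Set ℂ :=
  {l : ℂ | l ∈ poles T ∧ FiniteDimensional ℂ (LinearMap.ker (↑(T - l • 1) : X →ₗ[ℂ] X))}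

/-- The left poles of `T`: points `λ ∈ σ_a(T)` with `p = p(T-λ) < ∞` and `R((T-λ)^(p+1))`
closed. -/
def leftPoles (T : X →L[ℂ] X) : Set ℂ :=
  {l : ℂ | l ∈ sigma_a T ∧ ∃ p : ℕ,
    LinearMap.ker (↑((T - l • 1) ^ p) : X →ₗ[ℂ] X) = LinearMap.ker (↑((T - l • 1) ^ (p + 1)) : X →ₗ[ℂ] X) ∧
    (∀ m : ℕ, m < p → LinearMap.ker (↑((T - l • 1) ^ m) : X →ₗ[ℂ] X) ≠ LinearMap.ker (↑((T - l • 1) ^ (m + 1)) : X →ₗ[ℂ] X)) ∧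
    IsClosed ((LinearMap.range (↑((T - l • 1) ^ (p + 1)) : X →ₗ[ℂ] X) : Submodule ℂ X) : Set X)}

/-- The left poles of `T` of finite rank. -/
def leftPoles0 (T : X →L[ℂ] X) : Set ℂ :=
  {l : ℂ | l ∈ leftPoles T ∧ FiniteDimensional ℂ (LinearMap.ker (↑(T - l • 1) : X →ₗ[ℂ] X))}

/-- The isolated points of a subset of `ℂ`. -/
def isoPts (A : Set ℂ) : Set ℂ := {l : ℂ | l ∈ A ∧ ¬ AccPt l (𝓟 A)}

/-- `E(T)`: isolated spectral points that are eigenvalues. -/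
def Eset (T : X →L[ℂ] X) : Set ℂ :=
  {l : ℂ | l ∈ isoPts (spectrum ℂ T) ∧ LinearMap.ker (↑(T - l • 1) : X →ₗ[ℂ] X) ≠ ⊥}

/-- `E⁰(T)`: isolated spectral points that are eigenvalues of finite multiplicity. -/
def Eset0 (T : X →L[ℂ] X) : Set ℂ :=
  {l : ℂ | l ∈ isoPts (spectrum ℂ T) ∧ LinearMap.ker (↑(T - l • 1) : X →ₗ[ℂ] X) ≠ ⊥ ∧
    FiniteDimensional ℂ (LinearMap.ker (↑(T - l • 1) : X →ₗ[ℂ] X))}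

/-- `E_a(T)`: isolated points of the approximate point spectrum that are eigenvalues. -/
def Ea (T : X →L[ℂ] X) : Set ℂ :=
  {l : ℂ | l ∈ isoPts (sigma_a T) ∧ LinearMap.ker (↑(T - l • 1) : X →ₗ[ℂ] X) ≠ ⊥}

/-- `E_a⁰(T)`: isolated points of `σ_a(T)` that are eigenvalues of finite multiplicity. -/
def Ea0 (T : X →L[ℂ] X) : Set ℂ :=
  {l : ℂ | l ∈ isoPts (sigma_a T) ∧ LinearMap.ker (↑(T - l • 1) : X →ₗ[ℂ] X) ≠ ⊥ ∧
    FiniteDimensional ℂ (LinearMap.ker (↑(T - l • 1) : X →ₗ[ℂ] X))}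


section Aux

open LinearMap Submodule

variable {Y : Type*} [AddCommGroup Y] [Module ℂ Y]

lemma findim_of_sub_quot (N : Submodule ℂ Y) (h1 : FiniteDimensional ℂ N)
    (h2 : FiniteDimensional ℂ (Y ⧸ N)) : FiniteDimensional ℂ Y := by
  rw [FiniteDimensional, Module.finite_def]
  apply Submodule.fg_of_fg_map_of_fg_inf_ker N.mkQ
  · rw [Submodule.map_top, Submodule.range_mkQ]
    exact Module.finite_def.mp h2
  · rw [Submodule.ker_mkQ, top_inf_eq]
    exact Module.Finite.iff_fg.mp h1

/-- `p ⧸ (q ∩ p)` is isomorphic to the image of `p` in `Y ⧸ q`. -/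
noncomputable def quotEquivMapMkQ (p q : Submodule ℂ Y) :
    (↥p ⧸ Submodule.comap p.subtype q) ≃ₗ[ℂ] ↥(Submodule.map q.mkQ p) := by
  have hker : LinearMap.ker (q.mkQ.comp p.subtype) = Submodule.comap p.subtype q := by
    rw [LinearMap.ker_comp, Submodule.ker_mkQ]
  have hrange : LinearMap.range (q.mkQ.comp p.subtype) = Submodule.map q.mkQ p := by
    rw [LinearMap.range_comp, Submodule.range_subtype]
  exact (Submodule.quotEquivOfEq _ _ hker.symm).trans
    ((q.mkQ.comp p.subtype).quotKerEquivRange.trans (LinearEquiv.ofEq _ _ hrange))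

/-- The range of a bounded operator of finite codimension is closed. -/
lemma isClosed_range_of_finiteCodim (S : X →L[ℂ] X)
    (h : FiniteDimensional ℂ (X ⧸ LinearMap.range (S : X →ₗ[ℂ] X))) :
    IsClosed ((LinearMap.range (S : X →ₗ[ℂ] X) : Submodule ℂ X) : Set X) := by
  obtain ⟨F, hF⟩ := Submodule.exists_isCompl (LinearMap.range (S : X →ₗ[ℂ] X))
  haveI hFfd : FiniteDimensional ℂ F :=
    Module.Finite.equiv (Submodule.quotientEquivOfIsCompl _ _ hF)
  set Φ : (X × F) →L[ℂ] X :=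
    (S.comp (ContinuousLinearMap.fst ℂ X F)) + (F.subtypeL.comp (ContinuousLinearMap.snd ℂ X F))
    with hΦ
  have hΦapp : ∀ x : X, ∀ f : F, Φ (x, f) = S x + (f : X) := fun x f => rfl
  have hsurj : Function.Surjective Φ := by
    intro y
    have hy : y ∈ LinearMap.range (S : X →ₗ[ℂ] X) ⊔ F := by rw [hF.sup_eq_top]; trivial
    rcases Submodule.mem_sup.mp hy with ⟨r, ⟨x, rfl⟩, f, hf, rfl⟩
    exact ⟨(x, ⟨f, hf⟩), rfl⟩
  have hopen : IsOpenMap Φ := ContinuousLinearMap.isOpenMap Φ hsurj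
  have key : ((LinearMap.range (S : X →ₗ[ℂ] X) : Submodule ℂ X) : Set X)ᶜ = Φ '' {z : X × F | z.2 ≠ 0} := by
    ext y
    constructor
    · intro hy
      obtain ⟨⟨x, f⟩, hxf⟩ := hsurj y
      refine ⟨(x, f), ?_, hxf⟩
      intro hf0
      have hf0' : f = 0 := hf0
      apply hy
      rw [← hxf, hΦapp, hf0']
      simp only [Submodule.coe_zero, add_zero, SetLike.mem_coe]
      exact ⟨x, rfl⟩
    · rintro ⟨⟨x, f⟩, hf, rfl⟩
      intro hy
      apply hf
      simp only [SetLike.mem_coe, hΦapp] at hy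
      obtain ⟨z, hz⟩ := hy
      have hfm : (f : X) ∈ LinearMap.range (S : X →ₗ[ℂ] X) ⊓ F := by
        constructor
        · exact ⟨z - x, by rw [map_sub, hz]; simp⟩
        · exact f.2
      rw [hF.inf_eq_bot] at hfm
      exact Subtype.ext hfm
  have hclosed : IsOpen (((LinearMap.range (S : X →ₗ[ℂ] X) : Submodule ℂ X) : Set X)ᶜ) := by
    rw [key]
    exact hopen _ ((isOpen_compl_singleton).preimage continuous_snd)
  simpa using hclosed.isClosed_compl

/-- Descent step: finite codimension of `R(S^(j+2))` in `R(S^(j+1))` plus finite-dimensional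
kernel gives finite codimension of `R(S^(j+1))` in `R(S^j)`. -/
lemma codim_step (S : X →L[ℂ] X) (hker : FiniteDimensional ℂ (LinearMap.ker (S : X →ₗ[ℂ] X))) (j : ℕ)
    (h : FiniteDimensional ℂ
      ↥(Submodule.map (LinearMap.range (↑(S ^ (j + 2)) : X →ₗ[ℂ] X)).mkQ (LinearMap.range (↑(S ^ (j + 1)) : X →ₗ[ℂ] X)))) :
    FiniteDimensional ℂ
      ↥(Submodule.map (LinearMap.range (↑(S ^ (j + 1)) : X →ₗ[ℂ] X)).mkQ (LinearMap.range (↑(S ^ j) : X →ₗ[ℂ] X))) := by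
  set q1 : Submodule ℂ X := LinearMap.range (↑(S ^ (j + 1)) : X →ₗ[ℂ] X) with hq1
  set q2 : Submodule ℂ X := LinearMap.range (↑(S ^ (j + 2)) : X →ₗ[ℂ] X) with hq2
  set p : Submodule ℂ X := LinearMap.range (↑(S ^ j) : X →ₗ[ℂ] X) with hp
  have hpow1 : ∀ y : X, (S ^ (j + 1)) y = S ((S ^ j) y) := by
    intro y
    rw [pow_succ']
    rfl
  have hpow2 : ∀ y : X, (S ^ (j + 2)) y = S ((S ^ (j + 1)) y) := by
    intro y
    rw [pow_succ']
    rfl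
  have hle : q1 ≤ Submodule.comap (S : X →ₗ[ℂ] X) q2 := by
    rintro x ⟨y, rfl⟩
    refine ⟨y, ?_⟩
    show (S ^ (j + 2)) y = S ((S ^ (j + 1)) y)
    exact hpow2 y
  set Sbar : (X ⧸ q1) →ₗ[ℂ] (X ⧸ q2) := Submodule.mapQ q1 q2 (S : X →ₗ[ℂ] X) hle with hSbar
  have hSbarApp : ∀ x : X, Sbar (q1.mkQ x) = q2.mkQ (S x) := fun x => rfl
  set φ : ↥(Submodule.map q1.mkQ p) →ₗ[ℂ] (X ⧸ q2) :=
    Sbar.comp (Submodule.map q1.mkQ p).subtype with hφ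
  -- the range of φ is the image of q1 in X ⧸ q2
  have hrange : LinearMap.range φ = Submodule.map q2.mkQ q1 := by
    ext ybar
    constructor
    · rintro ⟨⟨xbar, hxbar⟩, rfl⟩
      obtain ⟨x, hxp, rfl⟩ := hxbar
      obtain ⟨w, rfl⟩ := hxp
      refine ⟨S ((S ^ j) w), ⟨w, hpow1 w⟩, ?_⟩
      exact (hSbarApp _).symm
    · rintro ⟨z, hz, rfl⟩
      obtain ⟨w, rfl⟩ := hz
      refine ⟨⟨q1.mkQ ((S ^ j) w), ⟨(S ^ j) w, ⟨w, rfl⟩, rfl⟩⟩, ?_⟩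
      show Sbar (q1.mkQ ((S ^ j) w)) = _
      rw [hSbarApp, ← hpow1]
      rfl
  -- the kernel of Sbar is contained in the image of ker S
  have hkerSbar : LinearMap.ker Sbar ≤ Submodule.map q1.mkQ (LinearMap.ker (S : X →ₗ[ℂ] X)) := by
    intro xbar hxbar
    obtain ⟨x, rfl⟩ := Submodule.mkQ_surjective q1 xbar
    have hx : q2.mkQ (S x) = 0 := hxbar
    rw [Submodule.mkQ_apply, Submodule.Quotient.mk_eq_zero] at hx
    obtain ⟨w, hw⟩ := hx
    refine ⟨x - (S ^ (j + 1)) w, ?_, ?_⟩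
    · show x - (S ^ (j + 1)) w ∈ LinearMap.ker (S : X →ₗ[ℂ] X)
      rw [LinearMap.mem_ker, map_sub, ContinuousLinearMap.coe_coe, ← hpow2,
        ← ContinuousLinearMap.coe_coe (S ^ (j + 2)), hw, sub_self]
    · rw [Submodule.mkQ_apply, Submodule.mkQ_apply, Submodule.Quotient.eq]
      exact ⟨-w, by rw [map_neg]; abel⟩
  haveI hmapfd : FiniteDimensional ℂ ↥(Submodule.map q1.mkQ (LinearMap.ker (S : X →ₗ[ℂ] X))) :=
    Module.Finite.map _ _
  have hkerφ : FiniteDimensional ℂ ↥(LinearMap.ker φ) := by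
    have hsub : Submodule.map (Submodule.map q1.mkQ p).subtype (LinearMap.ker φ) ≤
        Submodule.map q1.mkQ (LinearMap.ker (S : X →ₗ[ℂ] X)) := by
      rintro _ ⟨u, hu, rfl⟩
      have hu' : (u : X ⧸ q1) ∈ LinearMap.ker Sbar := by
        rw [LinearMap.mem_ker]
        exact LinearMap.mem_ker.mp hu
      exact hkerSbar hu'
    have e := Submodule.equivMapOfInjective (Submodule.map q1.mkQ p).subtype
      (Submodule.injective_subtype _) (LinearMap.ker φ)
    haveI := Submodule.finiteDimensional_of_le hsub
    exact Module.Finite.equiv e.symm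
  have hquot : FiniteDimensional ℂ (↥(Submodule.map q1.mkQ p) ⧸ LinearMap.ker φ) := by
    haveI : FiniteDimensional ℂ ↥(LinearMap.range φ) := by
      rw [hrange]; exact h
    exact Module.Finite.equiv φ.quotKerEquivRange.symm
  exact findim_of_sub_quot (LinearMap.ker φ) hkerφ hquot

lemma quot_range_findim (S : X →L[ℂ] X) (hker : FiniteDimensional ℂ (LinearMap.ker (S : X →ₗ[ℂ] X))) :
    ∀ n : ℕ, FiniteDimensional ℂ
      ↥(Submodule.map (LinearMap.range (↑(S ^ (n + 1)) : X →ₗ[ℂ] X)).mkQ (LinearMap.range (↑(S ^ n) : X →ₗ[ℂ] X))) →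
    FiniteDimensional ℂ (X ⧸ LinearMap.range (S : X →ₗ[ℂ] X)) := by
  intro n
  induction n with
  | zero =>
    intro h
    rw [zero_add, pow_one] at h
    have htop : Submodule.map (LinearMap.range (S : X →ₗ[ℂ] X)).mkQ (LinearMap.range (↑(S ^ 0) : X →ₗ[ℂ] X)) = ⊤ := by
      have : LinearMap.range (↑(S ^ 0) : X →ₗ[ℂ] X) = (⊤ : Submodule ℂ X) := by
        rw [pow_zero]
        exact LinearMap.range_eq_top.mpr (fun x => ⟨x, rfl⟩)
      rw [this, Submodule.map_top, Submodule.range_mkQ]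
    rw [htop] at h
    exact Module.Finite.equiv (Submodule.topEquiv (R := ℂ) (M := X ⧸ LinearMap.range (S : X →ₗ[ℂ] X)))
  | succ k ih =>
    intro h
    exact ih (codim_step S hker k h)

/-- A B-Fredholm operator with finite-dimensional kernel is Fredholm. -/
lemma isFredholm_of_quot (S : X →L[ℂ] X) (hker : FiniteDimensional ℂ (LinearMap.ker (S : X →ₗ[ℂ] X)))
    (n : ℕ)
    (hq : FiniteDimensional ℂ (↥(LinearMap.range (↑(S ^ n) : X →ₗ[ℂ] X)) ⧸
      Submodule.comap (LinearMap.range (↑(S ^ n) : X →ₗ[ℂ] X)).subtype (LinearMap.range (↑(S ^ (n + 1)) : X →ₗ[ℂ] X)))) :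
    IsFredholm S := by
  have h1 : FiniteDimensional ℂ
      ↥(Submodule.map (LinearMap.range (↑(S ^ (n + 1)) : X →ₗ[ℂ] X)).mkQ (LinearMap.range (↑(S ^ n) : X →ₗ[ℂ] X))) :=
    Module.Finite.equiv (quotEquivMapMkQ (LinearMap.range (↑(S ^ n) : X →ₗ[ℂ] X)) (LinearMap.range (↑(S ^ (n + 1)) : X →ₗ[ℂ] X)))
  have h2 := quot_range_findim S hker n h1
  exact ⟨hker, isClosed_range_of_finiteCodim S h2, h2⟩

/-- A Fredholm operator is B-Fredholm (with `n = 0`). -/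
lemma isBFredholm_of_isFredholm (S : X →L[ℂ] X) (hF : IsFredholm S) : IsBFredholm S := by
  have hr0 : LinearMap.range (↑(S ^ 0) : X →ₗ[ℂ] X) = (⊤ : Submodule ℂ X) := by
    rw [pow_zero]
    exact LinearMap.range_eq_top.mpr (fun x => ⟨x, rfl⟩)
  have hr1 : LinearMap.range (↑(S ^ (0 + 1)) : X →ₗ[ℂ] X) = LinearMap.range (S : X →ₗ[ℂ] X) := by rw [zero_add, pow_one]
  refine ⟨0, ?_, ?_, ?_, ?_⟩
  · rw [hr0]
    exact isClosed_univ
  · rw [hr1]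
    exact hF.2.1
  · rw [hr0, inf_top_eq]
    exact hF.1
  · haveI : FiniteDimensional ℂ (X ⧸ LinearMap.range (↑(S ^ (0 + 1)) : X →ₗ[ℂ] X)) := by
      rw [hr1]; exact hF.2.2
    have htop : Submodule.map (LinearMap.range (↑(S ^ (0 + 1)) : X →ₗ[ℂ] X)).mkQ (LinearMap.range (↑(S ^ 0) : X →ₗ[ℂ] X)) = ⊤ := by
      rw [hr0, Submodule.map_top, Submodule.range_mkQ]
    haveI : FiniteDimensional ℂ
        ↥(Submodule.map (LinearMap.range (↑(S ^ (0 + 1)) : X →ₗ[ℂ] X)).mkQ (LinearMap.range (↑(S ^ 0) : X →ₗ[ℂ] X))) := by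
      rw [htop]
      exact Module.Finite.equiv (Submodule.topEquiv (R := ℂ)
        (M := X ⧸ LinearMap.range (↑(S ^ (0 + 1)) : X →ₗ[ℂ] X))).symm
    exact Module.Finite.equiv (quotEquivMapMkQ (LinearMap.range (↑(S ^ 0) : X →ₗ[ℂ] X))
      (LinearMap.range (↑(S ^ (0 + 1)) : X →ₗ[ℂ] X))).symm

end Aux

/-- If `T ∈ (gab_e)` (on an infinite-dimensional complex Banach space),
then `T ∈ (ab_e)`. -/
theorem stmt0 (hX : ¬ FiniteDimensional ℂ X) (T : X →L[ℂ] X)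
    (h : spectrum ℂ T \ sigma_bf T = leftPoles T) :
    spectrum ℂ T \ sigma_e T = leftPoles0 T := by
  ext l
  constructor
  · intro hl
    obtain ⟨hls, hle⟩ := hl
    have hFred : IsFredholm (T - l • 1) := not_not.mp hle
    have hlp : l ∈ leftPoles T := by
      rw [← h]
      exact ⟨hls, fun hc => hc (isBFredholm_of_isFredholm _ hFred)⟩
    exact ⟨hlp, hFred.1⟩
  · rintro ⟨hlp, hker⟩
    have hmem : l ∈ spectrum ℂ T \ sigma_bf T := by rw [h]; exact hlp
    obtain ⟨hls, hbf⟩ := hmem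
    have hB : IsBFredholm (T - l • 1) := not_not.mp hbf
    obtain ⟨n, _, _, _, hq⟩ := hB
    exact ⟨hls, fun hc => hc (isFredholm_of_quot _ hker n hq)⟩
end

section
/- For a bounded linear operator T on a complex Banach space, if E_a(T) ⊆ σ(T)\σ_bf(T), then E_a^0(T) ⊆ σ(T)\σ_e(T). -/
open Filter Topology

variable {X : Type*} [NormedAddCommGroup X] [NormedSpace ℂ X] [CompleteSpace X]

private lemma fd_of_sub_quot {V : Type*} [AddCommGroup V] [Module ℂ V] (p : Submodule ℂ V)
    (h1 : FiniteDimensional ℂ p) (h2 : FiniteDimensional ℂ (V ⧸ p)) : FiniteDimensional ℂ V := by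
  have h := (isNoetherian_iff_submodule_quotient p).mpr
    ⟨IsNoetherian.iff_fg.mpr h1, IsNoetherian.iff_fg.mpr h2⟩
  exact IsNoetherian.iff_fg.mp h

private lemma fd_of_map {V W : Type*} [AddCommGroup V] [Module ℂ V] [AddCommGroup W] [Module ℂ W]
    (f : V →ₗ[ℂ] W) (hk : FiniteDimensional ℂ (LinearMap.ker f))
    (hr : FiniteDimensional ℂ (LinearMap.range f)) : FiniteDimensional ℂ V := by
  haveI := hr
  have h2 : FiniteDimensional ℂ (V ⧸ LinearMap.ker f) :=
    f.quotKerEquivRange.symm.finiteDimensional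
  exact fd_of_sub_quot _ hk h2

private lemma fd_ker_comp (f g : X →ₗ[ℂ] X) (hf : FiniteDimensional ℂ (LinearMap.ker f))
    (hg : FiniteDimensional ℂ (LinearMap.ker g)) :
    FiniteDimensional ℂ (LinearMap.ker (f ∘ₗ g)) := by
  set p := LinearMap.ker (f ∘ₗ g) with hp
  have hφ : ∀ x : p, g x.1 ∈ LinearMap.ker f := by
    rintro ⟨x, hx⟩
    exact hx
  let φ : p →ₗ[ℂ] LinearMap.ker f := LinearMap.codRestrict _ (g.domRestrict p) hφ
  apply fd_of_map φ
  · have hψ : ∀ x : LinearMap.ker φ, (x.1.1 : X) ∈ LinearMap.ker g := by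
      rintro ⟨⟨x, hx⟩, hx2⟩
      have : g x = 0 := by
        have := hx2
        simp only [LinearMap.mem_ker, φ, LinearMap.codRestrict] at this
        exact congrArg Subtype.val this
      simpa [LinearMap.mem_ker]
    haveI := hg
    refine FiniteDimensional.of_injective
      (LinearMap.codRestrict (LinearMap.ker g) (p.subtype ∘ₗ (LinearMap.ker φ).subtype) hψ) ?_
    intro a b hab
    have h3 : (a.1.1 : X) = b.1.1 := by
      have := congrArg (Subtype.val : LinearMap.ker g → X) hab
      exact this
    exact Subtype.ext (Subtype.ext h3)
  · haveI := hf
    infer_instance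

private lemma pow_apply_eq (S : X →L[ℂ] X) (m : ℕ) (x : X) :
    ((S : X →ₗ[ℂ] X) ^ m) x = (S ^ m) x := by
  induction m generalizing x with
  | zero => rfl
  | succ k ih =>
      rw [pow_succ, pow_succ, Module.End.mul_apply, ContinuousLinearMap.mul_apply]
      exact ih (S x)

private lemma fd_ker_pow (S : X →L[ℂ] X) (h : FiniteDimensional ℂ (LinearMap.ker (S : X →ₗ[ℂ] X))) (n : ℕ) :
    FiniteDimensional ℂ (LinearMap.ker (↑(S ^ n) : X →ₗ[ℂ] X)) := by
  have hcoe : ∀ m : ℕ, LinearMap.ker (↑(S ^ m) : X →ₗ[ℂ] X) = LinearMap.ker ((S : X →ₗ[ℂ] X) ^ m) := by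
    intro m
    ext x
    simp [LinearMap.mem_ker, pow_apply_eq]
  rw [hcoe]
  induction n with
  | zero => simpa using inferInstanceAs (FiniteDimensional ℂ (⊥ : Submodule ℂ X))
  | succ k ih =>
      have hmul : (S : X →ₗ[ℂ] X) ^ (k + 1) = ((S : X →ₗ[ℂ] X) ^ k) ∘ₗ (S : X →ₗ[ℂ] X) := by
        rw [pow_succ]; rfl
      rw [hmul]
      exact fd_ker_comp _ _ ih (by simpa using h)

private lemma isClosed_range_of_fd_quot (S : X →L[ℂ] X)
    (hq : FiniteDimensional ℂ (X ⧸ LinearMap.range (S : X →ₗ[ℂ] X))) :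
    IsClosed ((LinearMap.range (S : X →ₗ[ℂ] X) : Submodule ℂ X) : Set X) := by
  set N : Submodule ℂ X := LinearMap.range (S : X →ₗ[ℂ] X) with hN
  obtain ⟨F, hF⟩ := Submodule.exists_isCompl N
  haveI hFfd : FiniteDimensional ℂ F := by
    haveI := hq
    exact (N.quotientEquivOfIsCompl F hF).finiteDimensional
  haveI : CompleteSpace F := FiniteDimensional.complete ℂ F
  let u : (X × F) →L[ℂ] X :=
    S.comp (ContinuousLinearMap.fst ℂ X F) + F.subtypeL.comp (ContinuousLinearMap.snd ℂ X F)
  have huapp : ∀ p : X × F, u p = S p.1 + (p.2 : X) := fun p => rfl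
  have hu : Function.Surjective u := by
    intro x
    have hx : x ∈ N ⊔ F := by rw [hF.sup_eq_top]; trivial
    obtain ⟨n, hn, f, hf, hnf⟩ := Submodule.mem_sup.mp hx
    obtain ⟨y, hy⟩ := hn
    exact ⟨(y, ⟨f, hf⟩), by rw [huapp, ← hnf, ← hy]; rfl⟩
  have hopen : IsOpenMap u := u.isOpenMap hu
  have hpre : u ⁻¹' (N : Set X) = {p : X × F | (p.2 : X) = 0} := by
    ext ⟨x, f⟩
    simp only [Set.mem_preimage, Set.mem_setOf_eq, huapp]
    constructor
    · intro hmem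
      have hfN : (f : X) ∈ N := by
        have : (f : X) = (S x + f) - S x := by abel
        rw [this]
        exact N.sub_mem hmem ⟨x, rfl⟩
      have : (f : X) ∈ N ⊓ F := ⟨hfN, f.2⟩
      rw [hF.inf_eq_bot] at this
      exact this
    · intro hf0
      rw [hf0, add_zero]
      exact ⟨x, rfl⟩
  have hcl : IsClosed (u ⁻¹' (N : Set X)) := by
    rw [hpre]
    exact isClosed_eq (continuous_subtype_val.comp continuous_snd) continuous_const
  rw [← isOpen_compl_iff]
  have himg : (N : Set X)ᶜ = u '' ((u ⁻¹' (N : Set X))ᶜ) := by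
    rw [← Set.preimage_compl, Set.image_preimage_eq _ hu]
  rw [himg]
  exact hopen _ hcl.isOpen_compl

private lemma isFredholm_of_isBFredholm (S : X →L[ℂ] X) (hbf : IsBFredholm S)
    (hker : FiniteDimensional ℂ (LinearMap.ker (S : X →ₗ[ℂ] X))) : IsFredholm S := by
  obtain ⟨n, _hcl, _hcl', _hK, hQ⟩ := hbf
  set R : Submodule ℂ X := LinearMap.range (↑(S ^ n) : X →ₗ[ℂ] X) with hR
  have hmem : ∀ x : X, ((S ^ n : X →L[ℂ] X) : X →ₗ[ℂ] X) x ∈ R := fun x => ⟨x, rfl⟩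
  let c : X →ₗ[ℂ] R :=
    LinearMap.codRestrict R ((S ^ n : X →L[ℂ] X) : X →ₗ[ℂ] X) hmem
  let f : X →ₗ[ℂ] (↥R ⧸ Submodule.comap R.subtype (LinearMap.range (↑(S ^ (n + 1)) : X →ₗ[ℂ] X))) :=
    (Submodule.comap R.subtype (LinearMap.range (↑(S ^ (n + 1)) : X →ₗ[ℂ] X))).mkQ ∘ₗ c
  have hfker : ∀ x : X, f x = 0 ↔ (S ^ n) x ∈ LinearMap.range (↑(S ^ (n + 1)) : X →ₗ[ℂ] X) := by
    intro x
    simp only [f, c, LinearMap.comp_apply, Submodule.mkQ_apply, Submodule.Quotient.mk_eq_zero,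
      Submodule.mem_comap, LinearMap.codRestrict_apply, Submodule.coe_subtype,
      ContinuousLinearMap.coe_coe]
  have hpow : ∀ y : X, (S ^ (n + 1)) y = (S ^ n) (S y) := by
    intro y
    rw [pow_succ, ContinuousLinearMap.mul_apply]
  have hle : LinearMap.range (S : X →ₗ[ℂ] X) ≤ LinearMap.ker f := by
    rintro _ ⟨y, rfl⟩
    rw [LinearMap.mem_ker, hfker]
    exact ⟨y, (hpow y).symm ▸ rfl⟩
  let g := (LinearMap.range (S : X →ₗ[ℂ] X)).liftQ f hle
  have hkerg : FiniteDimensional ℂ (LinearMap.ker g) := by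
    have hkg : LinearMap.ker g =
        Submodule.map (LinearMap.range (S : X →ₗ[ℂ] X)).mkQ (LinearMap.ker f) := Submodule.ker_liftQ _ f hle
    have hsub : LinearMap.ker f ≤ LinearMap.ker (↑(S ^ n) : X →ₗ[ℂ] X) ⊔ LinearMap.range (S : X →ₗ[ℂ] X) := by
      intro x hx
      rw [LinearMap.mem_ker, hfker] at hx
      obtain ⟨y, hy⟩ := hx
      refine Submodule.mem_sup.mpr ⟨x - S y, ?_, S y, ⟨y, rfl⟩, by abel⟩
      rw [LinearMap.mem_ker, map_sub]
      exact sub_eq_zero.mpr (hy.symm.trans (hpow y))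
    haveI := fd_ker_pow S hker n
    haveI h1 : FiniteDimensional ℂ
        (Submodule.map (LinearMap.range (S : X →ₗ[ℂ] X)).mkQ (LinearMap.ker (↑(S ^ n) : X →ₗ[ℂ] X))) :=
      Module.Finite.map _ _
    refine Submodule.finiteDimensional_of_le (S₂ :=
      Submodule.map (LinearMap.range (S : X →ₗ[ℂ] X)).mkQ (LinearMap.ker (↑(S ^ n) : X →ₗ[ℂ] X))) ?_
    rw [hkg]
    refine le_trans (Submodule.map_mono hsub) ?_
    rw [Submodule.map_sup]
    refine sup_le le_rfl ?_
    rintro z hz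
    obtain ⟨x, hx, rfl⟩ := hz
    have h0 : (LinearMap.range (S : X →ₗ[ℂ] X)).mkQ x = 0 := by
      simpa [Submodule.Quotient.mk_eq_zero] using hx
    rw [h0]
    exact Submodule.zero_mem _
  haveI := hQ
  have hquot : FiniteDimensional ℂ (X ⧸ LinearMap.range (S : X →ₗ[ℂ] X)) :=
    fd_of_map g hkerg inferInstance
  exact ⟨hker, isClosed_range_of_fd_quot S hquot, hquot⟩

/-- If `E_a(T) ⊆ σ(T)\σ_bf(T)` then `E_a⁰(T) ⊆ σ(T)\σ_e(T)`. -/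
theorem stmt16 (T : X →L[ℂ] X) (h : Ea T ⊆ spectrum ℂ T \ sigma_bf T) :
    Ea0 T ⊆ spectrum ℂ T \ sigma_e T := by
  rintro l ⟨hiso, hk, hfd⟩
  have hmem : l ∈ Ea T := ⟨hiso, hk⟩
  obtain ⟨hspec, hbf⟩ := h hmem
  refine ⟨hspec, ?_⟩
  have hBF : IsBFredholm (T - l • 1) := not_not.mp hbf
  intro hcon
  exact hcon (isFredholm_of_isBFredholm _ hBF hfd)
end

section
/- Let T be the weighted shift operator on ℓ²(ℕ) defined by T(x₁,x₂,x₃,…) = (x₂/2, x₃/3, x₄/4, …). Then T is compact and quasinilpotent, σ(T) = σ_e(T) = {0}, 0 is an eigenvalue of T of finite multiplicity, and T does not belong to class (aw_e). -/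
open Filter Topology
open ENNReal

variable {X : Type*} [NormedAddCommGroup X] [NormedSpace ℂ X] [CompleteSpace X]

noncomputable abbrev Hsp := lp (fun _ : ℕ => ℂ) 2

lemma lp2_norm_le {f g : Hsp} {C : ℝ} (hC : 0 ≤ C)
    {σ : ℕ → ℕ} (hσ : Function.Injective σ)
    (h : ∀ k, ‖f k‖ ≤ C * ‖g (σ k)‖) : ‖f‖ ≤ C * ‖g‖ := by
  have hp : 0 < (2 : ℝ≥0∞).toReal := by norm_num
  refine lp.norm_le_of_tsum_le hp (by positivity) ?_
  rw [Real.mul_rpow hC (lp.norm_nonneg' g), lp.norm_rpow_eq_tsum hp g, ← tsum_mul_left]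
  refine ((lp.memℓp f).summable hp).tsum_le_tsum_of_inj σ hσ (fun c _ => by positivity) (fun k => ?_)
    (((lp.memℓp g).summable hp).mul_left _)
  calc ‖f k‖ ^ (2:ℝ≥0∞).toReal ≤ (C * ‖g (σ k)‖) ^ (2:ℝ≥0∞).toReal :=
        Real.rpow_le_rpow (norm_nonneg _) (h k) hp.le
    _ = C ^ (2:ℝ≥0∞).toReal * ‖g (σ k)‖ ^ (2:ℝ≥0∞).toReal := Real.mul_rpow hC (norm_nonneg _)

noncomputable def evCLM (i : ℕ) : Hsp →L[ℂ] ℂ :=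
  LinearMap.mkContinuous
    { toFun := fun f => f i
      map_add' := fun f g => by simp [lp.coeFn_add]
      map_smul' := fun c f => by simp [lp.coeFn_smul] }
    1 (fun f => by rw [one_mul]; exact lp.norm_apply_le_norm (by norm_num) f i)

@[simp] lemma evCLM_apply (i : ℕ) (f : Hsp) : evCLM i f = f i := rfl

lemma rankOne_compact (f : Hsp →L[ℂ] ℂ) (c : Hsp) :
    IsCompactOperator fun x => f x • c := by
  refine ⟨(fun t : ℂ => t • c) '' Metric.closedBall 0 ‖f‖,
    (isCompact_closedBall 0 _).image (continuous_id.smul continuous_const), ?_⟩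
  filter_upwards [Metric.closedBall_mem_nhds (0 : Hsp) one_pos] with x hx
  refine ⟨f x, ?_, rfl⟩
  rw [Metric.mem_closedBall, dist_zero_right]
  calc ‖f x‖ ≤ ‖f‖ * ‖x‖ := f.le_opNorm x
    _ ≤ ‖f‖ * 1 := by
        have : ‖x‖ ≤ 1 := by simpa [dist_zero_right] using hx
        nlinarith [norm_nonneg f]
    _ = ‖f‖ := mul_one _

noncomputable def esp (k : ℕ) : Hsp := lp.single 2 k (1 : ℂ)

lemma esp_ne_zero (k : ℕ) : esp k ≠ 0 := by
  intro h
  have : (esp k : ∀ _ : ℕ, ℂ) k = 0 := by rw [h]; simp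
  rw [esp, lp.single_apply_self] at this
  exact one_ne_zero this

lemma norm_esp (k : ℕ) : ‖esp k‖ = 1 := by
  have := lp.norm_single (E := fun _ : ℕ => ℂ) (by norm_num : (0:ℝ≥0∞) < 2) k (1:ℂ)
  simpa [esp] using this

noncomputable def TN (N : ℕ) : Hsp →L[ℂ] Hsp :=
  ∑ k ∈ Finset.range N, (((k + 2 : ℕ) : ℂ))⁻¹ • (evCLM (k + 1)).smulRight (esp k)

lemma TN_compact (N : ℕ) : IsCompactOperator (TN N) := by
  have key : ∀ (s : Finset ℕ), IsCompactOperator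
      ⇑(∑ k ∈ s, (((k + 2 : ℕ) : ℂ))⁻¹ • (evCLM (k + 1)).smulRight (esp k)) := by
    intro s
    induction s using Finset.cons_induction with
    | empty =>
      rw [Finset.sum_empty, ContinuousLinearMap.coe_zero']
      exact isCompactOperator_zero
    | cons a s ha ih =>
      rw [Finset.sum_cons, ContinuousLinearMap.coe_add']
      refine IsCompactOperator.add ?_ ih
      have hco : ⇑((evCLM (a + 1)).smulRight (esp a)) = fun x => evCLM (a + 1) x • esp a := by
        funext x; rfl
      rw [ContinuousLinearMap.coe_smul', hco]
      exact (rankOne_compact _ _).smul _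
  unfold TN
  exact key (Finset.range N)

lemma TN_apply (N : ℕ) (x : Hsp) (j : ℕ) :
    (TN N) x j = if j < N then x (j + 1) / ((j + 2 : ℕ) : ℂ) else 0 := by
  rw [TN]
  have h1 : ((∑ k ∈ Finset.range N, (((k + 2 : ℕ) : ℂ))⁻¹ • (evCLM (k + 1)).smulRight (esp k)) x)
      = ∑ k ∈ Finset.range N, ((((k + 2 : ℕ) : ℂ))⁻¹ * x (k + 1)) • esp k := by
    rw [ContinuousLinearMap.sum_apply]
    congr 1
    funext k
    simp [ContinuousLinearMap.smul_apply, ContinuousLinearMap.smulRight_apply, mul_smul]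
  rw [h1]
  have h2 : ((∑ k ∈ Finset.range N, ((((k + 2 : ℕ) : ℂ))⁻¹ * x (k + 1)) • esp k : Hsp) : ∀ _ : ℕ, ℂ) j
      = ∑ k ∈ Finset.range N, (((((k + 2 : ℕ) : ℂ))⁻¹ * x (k + 1)) • esp k : Hsp) j := by
    rw [lp.coeFn_sum]
    simp
  rw [h2]
  have h3 : ∀ k, ((((((k + 2 : ℕ) : ℂ))⁻¹ * x (k + 1)) • esp k : Hsp) : ∀ _ : ℕ, ℂ) j
      = if k = j then x (k + 1) / ((k + 2 : ℕ) : ℂ) else 0 := by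
    intro k
    rw [lp.coeFn_smul]
    rcases eq_or_ne k j with rfl | hjk
    · simp [esp, lp.single_apply_self, div_eq_inv_mul]
    · simp [esp, lp.single_apply, hjk, hjk.symm]
  rw [Finset.sum_congr rfl fun k _ => h3 k]
  rw [Finset.sum_ite_eq' (Finset.range N) j fun k => x (k + 1) / ((k + 2 : ℕ) : ℂ)]
  simp [Finset.mem_range]


section main
variable (T : lp (fun _ : ℕ => ℂ) 2 →L[ℂ] lp (fun _ : ℕ => ℂ) 2)
    (hT : ∀ (x : lp (fun _ : ℕ => ℂ) 2) (n : ℕ), T x n = x (n + 1) / ((n + 2 : ℕ) : ℂ))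
include hT

lemma T_esp_zero : T (esp 0) = 0 := by
  ext n
  rw [hT]
  simp [esp, lp.single_apply]

lemma ker_T_le : LinearMap.ker (T : Hsp →ₗ[ℂ] Hsp) ≤ Submodule.span ℂ {esp 0} := by
  intro x hx
  have hx' : T x = 0 := hx
  have hcoord : ∀ n : ℕ, x (n + 1) = 0 := by
    intro n
    have h1 : T x n = 0 := by rw [hx']; simp
    rw [hT] at h1
    have h2 : ((n + 2 : ℕ) : ℂ) ≠ 0 := Nat.cast_ne_zero.mpr (by omega)
    rcases div_eq_zero_iff.mp h1 with h | h
    · exact h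
    · exact absurd h h2
  have : x = x 0 • esp 0 := by
    ext n
    cases n with
    | zero => simp [esp, lp.coeFn_smul, lp.single_apply]
    | succ m => simp [esp, lp.coeFn_smul, lp.single_apply, hcoord m]
  rw [this]
  exact Submodule.smul_mem _ _ (Submodule.mem_span_singleton_self _)

lemma ker_ne_bot : LinearMap.ker (T : Hsp →ₗ[ℂ] Hsp) ≠ ⊥ := by
  intro h
  have : esp 0 ∈ LinearMap.ker (T : Hsp →ₗ[ℂ] Hsp) := by
    rw [LinearMap.mem_ker]; exact T_esp_zero T hT
  rw [h, Submodule.mem_bot] at this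
  exact esp_ne_zero 0 this

lemma ker_findim : FiniteDimensional ℂ (LinearMap.ker (T : Hsp →ₗ[ℂ] Hsp)) :=
  Submodule.finiteDimensional_of_le (ker_T_le T hT)

lemma pow_coord_bound : ∀ (n : ℕ) (x : Hsp) (k : ℕ),
    ‖((T ^ n) x) k‖ ≤ (((n + 1).factorial : ℝ))⁻¹ * ‖x (k + n)‖ := by
  intro n
  induction n with
  | zero => intro x k; simp
  | succ n ih =>
    intro x k
    have h1 : ((T ^ (n + 1)) x) k = ((T ^ n) (T x)) k := by
      rw [pow_succ, ContinuousLinearMap.mul_apply]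
    rw [h1]
    have hTx : ‖(T x) (k + n)‖ = ‖x (k + n + 1)‖ / ((k + n + 2 : ℕ) : ℝ) := by
      rw [hT, norm_div]
      congr 1
      simpa using Complex.norm_natCast (k + n + 2)
    have hA : (0:ℝ) < ((n + 1).factorial : ℝ) := by positivity
    have hB : (0:ℝ) < ((k + n + 2 : ℕ) : ℝ) := by positivity
    have hC : (0:ℝ) < ((n + 2).factorial : ℝ) := by positivity
    have hfac : ((n + 2).factorial : ℝ) ≤ ((n + 1).factorial : ℝ) * ((k + n + 2 : ℕ) : ℝ) := by
      have : (n + 2).factorial = (n + 2) * (n + 1).factorial := Nat.factorial_succ (n + 1)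
      rw [this]
      push_cast
      nlinarith [Nat.cast_nonneg (α := ℝ) k, hA]
    calc ‖((T ^ n) (T x)) k‖ ≤ (((n + 1).factorial : ℝ))⁻¹ * ‖(T x) (k + n)‖ := ih (T x) k
      _ = ‖x (k + (n + 1))‖ / (((n + 1).factorial : ℝ) * ((k + n + 2 : ℕ) : ℝ)) := by
          rw [hTx]
          have : k + n + 1 = k + (n + 1) := by ring
          rw [this]
          field_simp
      _ ≤ ‖x (k + (n + 1))‖ / ((n + 2).factorial : ℝ) :=
          div_le_div_of_nonneg_left (norm_nonneg _) hC hfac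
      _ = (((n + 2).factorial : ℝ))⁻¹ * ‖x (k + (n + 1))‖ := by rw [div_eq_inv_mul]

lemma pow_norm_bound (n : ℕ) (x : Hsp) :
    ‖(T ^ n) x‖ ≤ (((n + 1).factorial : ℝ))⁻¹ * ‖x‖ :=
  lp2_norm_le (by positivity) (add_left_injective n) (pow_coord_bound T hT n x)

lemma T_not_unit : ¬ IsUnit T := by
  intro h
  obtain ⟨u, hu⟩ := h
  have h1 : (↑u⁻¹ * ↑u : Hsp →L[ℂ] Hsp) = 1 := u.inv_mul
  have h2 : esp 0 = 0 := by
    calc esp 0 = ((↑u⁻¹ * ↑u : Hsp →L[ℂ] Hsp)) (esp 0) := by rw [h1]; rfl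
      _ = (↑u⁻¹ : Hsp →L[ℂ] Hsp) (T (esp 0)) := by rw [ContinuousLinearMap.mul_apply, hu]
      _ = 0 := by rw [T_esp_zero T hT, map_zero]
  exact esp_ne_zero 0 h2

lemma spectrum_eq : spectrum ℂ T = {0} := by
  haveI : Nontrivial Hsp := ⟨esp 0, 0, esp_ne_zero 0⟩
  apply Set.eq_singleton_iff_unique_mem.mpr
  constructor
  · exact (spectrum.zero_mem_iff ℂ).mpr (T_not_unit T hT)
  · intro l hl
    by_contra hl0
    have hnorm : ∀ n : ℕ, ‖l‖ ^ n ≤ (((n + 1).factorial : ℝ))⁻¹ := by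
      intro n
      have h1 : l ^ n ∈ spectrum ℂ (T ^ n) := spectrum.pow_image_subset T n ⟨l, hl, rfl⟩
      have h2 : ‖l ^ n‖ ≤ ‖T ^ n‖ := spectrum.norm_le_norm_of_mem h1
      rw [norm_pow] at h2
      refine h2.trans ?_
      exact ContinuousLinearMap.opNorm_le_bound _ (by positivity) (pow_norm_bound T hT n)
    have hpos : 0 < ‖l‖ := norm_pos_iff.mpr hl0
    have htend := FloorSemiring.tendsto_pow_div_factorial_atTop (‖l‖⁻¹)
    obtain ⟨n, hn⟩ := (htend.eventually (gt_mem_nhds one_pos)).exists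
    have hfac : (0:ℝ) < (n.factorial : ℝ) := by positivity
    have h3 : ‖l‖⁻¹ ^ n < (n.factorial : ℝ) := by
      rw [div_lt_iff₀ hfac] at hn
      simpa using hn
    have h4 : ((n.factorial : ℝ))⁻¹ < ‖l‖ ^ n := by
      rw [inv_pow] at h3
      exact inv_lt_of_inv_lt₀ (by positivity) h3
    have h5 : ((n + 1).factorial : ℝ) ≥ (n.factorial : ℝ) := by
      exact_mod_cast Nat.factorial_le (Nat.le_succ n)
    have h6 : (((n + 1).factorial : ℝ))⁻¹ ≤ ((n.factorial : ℝ))⁻¹ :=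
      inv_anti₀ hfac h5
    exact absurd ((hnorm n).trans h6) (not_le.mpr h4)


lemma isUnit_sub_smul (l : ℂ) (hl : l ≠ 0) : IsUnit (T - l • 1) := by
  have h1 : l ∉ spectrum ℂ T := by rw [spectrum_eq T hT]; exact hl
  have h2 := spectrum.notMem_iff.mp h1
  have h3 : T - l • 1 = -(algebraMap ℂ (Hsp →L[ℂ] Hsp) l - T) := by
    rw [Algebra.algebraMap_eq_smul_one, neg_sub]
  rw [h3]
  exact h2.neg

lemma single_mem_range (i : ℕ) (a : ℂ) : lp.single 2 i a ∈ LinearMap.range (T : Hsp →ₗ[ℂ] Hsp) := by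
  refine ⟨lp.single 2 (i + 1) (((i + 2 : ℕ) : ℂ) * a), ?_⟩
  ext n
  change (T (lp.single 2 (i + 1) (((i + 2 : ℕ) : ℂ) * a)) : ℕ → ℂ) n = (lp.single 2 i a : ℕ → ℂ) n
  rw [hT]
  rcases eq_or_ne n i with rfl | hn
  · rw [lp.single_apply_self, lp.single_apply_self]
    have : ((n + 2 : ℕ) : ℂ) ≠ 0 := Nat.cast_ne_zero.mpr (by omega)
    push_cast at this ⊢
    rw [mul_comm, mul_div_assoc, div_self this, mul_one]
  · have h1 : n + 1 ≠ i + 1 := fun h => hn (by omega)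
    rw [lp.single_apply, lp.single_apply, Pi.single_eq_of_ne h1, Pi.single_eq_of_ne hn, zero_div]

lemma not_fredholm_T : ¬ IsFredholm T := by
  rintro ⟨-, hclosed, -⟩
  -- range T is closed and contains all singles, hence is everything
  have hrange : ∀ y : Hsp, y ∈ LinearMap.range (T : Hsp →ₗ[ℂ] Hsp) := by
    intro y
    have hsum : HasSum (fun i => lp.single 2 i (y i)) y :=
      lp.hasSum_single (by norm_num) y
    refine hclosed.mem_of_tendsto hsum (Filter.Eventually.of_forall fun s => ?_)
    exact Submodule.sum_mem _ fun i _ => single_mem_range T hT i (y i)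
  -- but the element (1/(n+2))ₙ is not in the range
  have hmem : Memℓp (fun n : ℕ => ((n + 2 : ℕ) : ℂ)⁻¹) 2 := by
    apply memℓp_gen
    have hs : Summable (fun n : ℕ => 1 / ((n : ℝ) + 2) ^ (2 : ℕ)) := by
      have := (summable_nat_add_iff (f := fun n : ℕ => 1 / (n : ℝ) ^ (2 : ℕ)) 2).mpr
        (Real.summable_one_div_nat_pow.mpr one_lt_two)
      simpa using this
    apply hs.congr
    intro n
    rw [norm_inv]
    have h2 : ‖((n + 2 : ℕ) : ℂ)‖ = ((n : ℝ) + 2) := by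
      simpa using Complex.norm_natCast (n + 2)
    rw [h2, show ((2 : ℝ≥0∞).toReal) = ((2 : ℕ) : ℝ) by norm_num, Real.rpow_natCast,
      one_div, inv_pow]
  obtain ⟨x, hx⟩ := hrange (⟨_, hmem⟩ : Hsp)
  have hx1 : ∀ n : ℕ, x (n + 1) = 1 := by
    intro n
    have h1 : T x n = ((n + 2 : ℕ) : ℂ)⁻¹ := by exact congrArg (fun y : Hsp => (y : ℕ → ℂ) n) hx
    rw [hT] at h1
    have h2 : ((n + 2 : ℕ) : ℂ) ≠ 0 := Nat.cast_ne_zero.mpr (by omega)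
    rw [div_eq_iff h2] at h1
    rwa [inv_mul_cancel₀ h2] at h1
  -- contradiction with summability
  have hsum := (lp.memℓp x).summable (by norm_num : 0 < (2 : ℝ≥0∞).toReal)
  have htends := hsum.tendsto_atTop_zero
  have htends' : Filter.Tendsto (fun n : ℕ => ‖x (n + 1)‖ ^ (2 : ℝ≥0∞).toReal)
      Filter.atTop (nhds 0) := htends.comp (Filter.tendsto_add_atTop_nat 1)
  have hconst : (fun n : ℕ => ‖x (n + 1)‖ ^ (2 : ℝ≥0∞).toReal) = fun _ => (1 : ℝ) := by
    funext n
    rw [hx1 n]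
    simp
  rw [hconst] at htends'
  exact one_ne_zero (tendsto_nhds_unique tendsto_const_nhds htends')

lemma fredholm_of_unit {S : Hsp →L[ℂ] Hsp} (h : IsUnit S) : IsFredholm S := by
  obtain ⟨u, hu⟩ := h
  have hinv : ∀ z, (↑u⁻¹ : Hsp →L[ℂ] Hsp) (S z) = z := fun z => by
    rw [← hu, ← ContinuousLinearMap.mul_apply, u.inv_mul, ContinuousLinearMap.one_apply]
  have hinv2 : ∀ z, S ((↑u⁻¹ : Hsp →L[ℂ] Hsp) z) = z := fun z => by
    rw [← hu, ← ContinuousLinearMap.mul_apply, u.mul_inv, ContinuousLinearMap.one_apply]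
  have hker : LinearMap.ker (S : Hsp →ₗ[ℂ] Hsp) = ⊥ := LinearMap.ker_eq_bot.mpr fun x y hxy => by
    have hxy' : S x = S y := hxy
    rw [← hinv x, hxy', hinv y]
  have hrange : LinearMap.range (S : Hsp →ₗ[ℂ] Hsp) = ⊤ := LinearMap.range_eq_top.mpr fun y => ⟨_, hinv2 y⟩
  refine ⟨by rw [hker]; infer_instance, by rw [hrange, Submodule.top_coe]; exact isClosed_univ, ?_⟩
  haveI : Subsingleton (Hsp ⧸ LinearMap.range (S : Hsp →ₗ[ℂ] Hsp)) := by
    rw [Submodule.Quotient.subsingleton_iff]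
    exact hrange
  infer_instance

lemma sigma_e_eq : sigma_e T = {0} := by
  ext l
  simp only [sigma_e, Set.mem_setOf_eq, Set.mem_singleton_iff]
  constructor
  · intro h
    by_contra hl
    exact h (fredholm_of_unit T hT (isUnit_sub_smul T hT l hl))
  · rintro rfl
    intro h
    apply not_fredholm_T T hT
    have : T - (0 : ℂ) • 1 = T := by simp
    rwa [this] at h

lemma sigma_a_eq : sigma_a T = {0} := by
  ext l
  simp only [sigma_a, Set.mem_setOf_eq, Set.mem_singleton_iff]
  constructor
  · intro h
    by_contra hl
    apply h
    obtain ⟨u, hu⟩ := isUnit_sub_smul T hT l hl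
    set U : Hsp →L[ℂ] Hsp := ↑u⁻¹ with hU
    have hinv : ∀ z, U ((T - l • 1) z) = z := fun z => by
      rw [hU, ← hu, ← ContinuousLinearMap.mul_apply, u.inv_mul, ContinuousLinearMap.one_apply]
    have hUpos : 0 < ‖U‖ := by
      rcases (norm_nonneg U).lt_or_eq with hh | hh
      · exact hh
      · exfalso
        have hU0 : U = 0 := by rw [← ContinuousLinearMap.opNorm_zero_iff]; exact hh.symm
        have h2 := hinv (esp 0)
        rw [hU0] at h2
        simp at h2
        exact esp_ne_zero 0 h2.symm
    refine ⟨‖U‖⁻¹, inv_pos.mpr hUpos, fun x => ?_⟩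
    have h1 : ‖x‖ ≤ ‖U‖ * ‖(T - l • 1) x‖ := by
      conv_lhs => rw [← hinv x]
      exact U.le_opNorm _
    calc ‖U‖⁻¹ * ‖x‖ ≤ ‖U‖⁻¹ * (‖U‖ * ‖(T - l • 1) x‖) :=
          mul_le_mul_of_nonneg_left h1 (inv_nonneg.mpr (norm_nonneg _))
      _ = ‖(T - l • 1) x‖ := by rw [← mul_assoc, inv_mul_cancel₀ (ne_of_gt hUpos), one_mul]
  · rintro rfl
    intro ⟨c, hc, h⟩
    have h0 := h (esp 0)
    have h1 : (T - (0 : ℂ) • 1) (esp 0) = 0 := by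
      simp [T_esp_zero T hT]
    rw [h1, norm_zero, norm_esp, mul_one] at h0
    exact absurd h0 (not_le.mpr hc)

lemma zero_mem_Ea0 : (0 : ℂ) ∈ Ea0 T := by
  refine ⟨⟨?_, ?_⟩, ?_, ?_⟩
  · rw [sigma_a_eq T hT]; rfl
  · rw [sigma_a_eq T hT]
    intro hacc
    obtain ⟨y, hy, hy0⟩ := accPt_iff_nhds.mp hacc Set.univ Filter.univ_mem
    exact hy0 hy.2
  · have : T - (0 : ℂ) • 1 = T := by simp
    rw [this]; exact ker_ne_bot T hT
  · have : T - (0 : ℂ) • 1 = T := by simp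
    rw [this]; exact ker_findim T hT

lemma T_compact : IsCompactOperator T := by
  have hb : ∀ N : ℕ, ‖TN N - T‖ ≤ (((N : ℝ) + 2))⁻¹ := by
    intro N
    apply ContinuousLinearMap.opNorm_le_bound _ (by positivity)
    intro x
    apply lp2_norm_le (by positivity) (add_left_injective 1)
    intro k
    have h1 : ((TN N - T) x) k = (TN N) x k - T x k := by
      rw [ContinuousLinearMap.sub_apply]; rfl
    rw [h1, TN_apply, hT]
    rcases lt_or_ge k N with hk | hk
    · rw [if_pos hk, sub_self, norm_zero]
      positivity
    · rw [if_neg (not_lt.mpr hk), zero_sub, norm_neg, norm_div]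
      have h2 : ‖((k + 2 : ℕ) : ℂ)‖ = ((k : ℝ) + 2) := by
        simpa using Complex.norm_natCast (k + 2)
      rw [h2, div_eq_inv_mul]
      apply mul_le_mul_of_nonneg_right _ (norm_nonneg _)
      apply inv_anti₀ (by positivity)
      have : (N : ℝ) ≤ (k : ℝ) := Nat.cast_le.mpr hk
      linarith
  have htend : Filter.Tendsto (fun N : ℕ => (((N : ℝ) + 2))⁻¹) Filter.atTop (nhds 0) := by
    apply Filter.Tendsto.inv_tendsto_atTop
    exact Filter.tendsto_atTop_add_const_right _ 2 tendsto_natCast_atTop_atTop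
  have hten : Filter.Tendsto TN Filter.atTop (nhds T) := by
    rw [tendsto_iff_norm_sub_tendsto_zero]
    exact squeeze_zero (fun N => norm_nonneg _) hb htend
  exact isCompactOperator_of_tendsto hten (Filter.Eventually.of_forall TN_compact)

end main

/-- the weighted backward shift `T(x₁,x₂,x₃,…) = (x₂/2, x₃/3, x₄/4, …)`
on `ℓ²(ℕ)` is compact and quasinilpotent, `σ(T) = σ_e(T) = {0}`, `0` is an eigenvalue of
finite multiplicity, and `T ∉ (aw_e)`. -/
theorem stmt19 (T : lp (fun _ : ℕ => ℂ) 2 →L[ℂ] lp (fun _ : ℕ => ℂ) 2)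
    (hT : ∀ (x : lp (fun _ : ℕ => ℂ) 2) (n : ℕ), T x n = x (n + 1) / ((n + 2 : ℕ) : ℂ)) :
    IsCompactOperator T ∧ spectrum ℂ T = {0} ∧ sigma_e T = {0} ∧
      (LinearMap.ker (T : lp (fun _ : ℕ => ℂ) 2 →ₗ[ℂ] lp (fun _ : ℕ => ℂ) 2) ≠ ⊥ ∧ FiniteDimensional ℂ (LinearMap.ker (T : lp (fun _ : ℕ => ℂ) 2 →ₗ[ℂ] lp (fun _ : ℕ => ℂ) 2))) ∧
      spectrum ℂ T \ sigma_e T ≠ Ea0 T := by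
  refine ⟨T_compact T hT, spectrum_eq T hT, sigma_e_eq T hT,
    ⟨ker_ne_bot T hT, ker_findim T hT⟩, ?_⟩
  rw [spectrum_eq T hT, sigma_e_eq T hT]
  intro h
  have h0 := zero_mem_Ea0 T hT
  rw [← h] at h0
  simp at h0
end
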